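/- For an involution σ in S_n with Biane labeled Motzkin path (μ, λ), the number of visible inversions of σ equals H(μ,λ) = Σ_i H_i, where H_i = λ_i − 1 if μ_i = D and H_i = h_i(μ) if μ_i ∈ {U, L}. -/

import Mathlib

open Finset

/-- Steps of a Motzkin path: up, level, down. -/
inductive Step | U | L | D
deriving DecidableEq

instance instFintypeStep : Fintype Step :=
  ⟨{Step.U, Step.L, Step.D}, fun x => by cases x <;> simp⟩

/-- `μ` is a Motzkin path: every prefix has at least as many `U`'s as `D`'s, and the
total numbers of `U`'s and `D`'s agree. -/
def IsMotzkin {n : ℕ} (μ : Fin n → Step) : Prop :=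
  (∀ k : Fin n, (Finset.univ.filter (fun j => j ≤ k ∧ μ j = Step.D)).card
      ≤ (Finset.univ.filter (fun j => j ≤ k ∧ μ j = Step.U)).card)
  ∧ (Finset.univ.filter (fun j => μ j = Step.U)).card
    = (Finset.univ.filter (fun j => μ j = Step.D)).card

/-- The height of the `i`-th step of `μ`: the larger of the two `y`-coordinates of
the step, i.e. `#{j ≤ i : μ j = U} − #{j < i : μ j = D}`. -/
def height {n : ℕ} (μ : Fin n → Step) (i : Fin n) : ℕ :=
  (Finset.univ.filter (fun j => j ≤ i ∧ μ j = Step.U)).card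
    - (Finset.univ.filter (fun j => j < i ∧ μ j = Step.D)).card

/-- Biane's word of an involution: `U` if `i < σ i`, `L` if `i = σ i`, `D` if `i > σ i`. -/
def bpath {n : ℕ} (σ : Equiv.Perm (Fin n)) (i : Fin n) : Step :=
  if i < σ i then Step.U else if σ i = i then Step.L else Step.D

/-- Biane's label of step `i`: `|{j ≥ i : σ j ≤ σ i}|`. -/
def blabel {n : ℕ} (σ : Equiv.Perm (Fin n)) (i : Fin n) : ℕ :=
  (Finset.univ.filter (fun j => i ≤ j ∧ σ j ≤ σ i)).card

lemma bpath_eq_U {n : ℕ} (σ : Equiv.Perm (Fin n)) (i : Fin n) :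
    bpath σ i = Step.U ↔ i < σ i := by
  unfold bpath
  split_ifs with h1 h2 <;> simp_all

lemma bpath_eq_D {n : ℕ} (σ : Equiv.Perm (Fin n)) (i : Fin n) :
    bpath σ i = Step.D ↔ σ i < i := by
  unfold bpath
  split_ifs with h1 h2
  · simp only [reduceCtorEq, false_iff]
    exact fun h => absurd (h.trans h1) (lt_irrefl _)
  · simp only [reduceCtorEq, false_iff]
    exact fun h => absurd h2 (ne_of_lt h)
  · simp only [true_iff]
    rcases lt_trichotomy (σ i) i with h | h | h
    · exact h
    · exact absurd h h2
    · exact absurd h h1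

/-- The fiber of visible inversions over `i`, after the substitution `k = σ j`. -/
def Tset {n : ℕ} (σ : Equiv.Perm (Fin n)) (i : Fin n) : Finset (Fin n) :=
  Finset.univ.filter (fun k => k ≤ i ∧ k < σ i ∧ i < σ k)

lemma card_Tset_D {n : ℕ} (σ : Equiv.Perm (Fin n)) (hinv : ∀ i, σ (σ i) = i)
    (i : Fin n) (hi : σ i < i) : (Tset σ i).card = blabel σ i - 1 := by
  have hblabel : blabel σ i = (Tset σ i).card + 1 := by
    have h1 : blabel σ i
        = (Finset.univ.filter (fun k => i ≤ σ k ∧ k ≤ σ i)).card := by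
      unfold blabel
      apply Finset.card_bij (fun j _ => σ j)
      · intro j hj
        simp only [mem_filter, mem_univ, true_and] at hj ⊢
        exact ⟨by rw [hinv]; exact hj.1, hj.2⟩
      · intro a ha b hb hab
        exact σ.injective hab
      · intro k hk
        simp only [mem_filter, mem_univ, true_and] at hk
        exact ⟨σ k, by simp only [mem_filter, mem_univ, true_and, hinv]; exact ⟨hk.1, hk.2⟩, hinv k⟩
    have h2 : (Finset.univ.filter (fun k => i ≤ σ k ∧ k ≤ σ i))
        = insert (σ i) (Tset σ i) := by
      ext k
      simp only [mem_filter, mem_univ, true_and, mem_insert, Tset]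
      constructor
      · rintro ⟨h1', h2'⟩
        rcases eq_or_lt_of_le h2' with h | h
        · exact Or.inl h
        · refine Or.inr ⟨?_, h, ?_⟩
          · exact le_of_lt (h.trans hi)
          · rcases eq_or_lt_of_le h1' with h' | h'
            · exact absurd (show σ i = k by rw [h', hinv]) (ne_of_lt h).symm
            · exact h'
      · rintro (h | ⟨h1', h2', h3'⟩)
        · subst h
          exact ⟨le_of_eq (hinv i).symm, le_refl _⟩
        · exact ⟨le_of_lt h3', le_of_lt h2'⟩
    have h3 : σ i ∉ Tset σ i := by
      simp only [Tset, mem_filter, mem_univ, true_and]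
      rintro ⟨-, h, -⟩
      exact absurd h (lt_irrefl _)
    rw [h1, h2, Finset.card_insert_of_notMem h3]
  omega

lemma card_Tset_UL {n : ℕ} (σ : Equiv.Perm (Fin n)) (hinv : ∀ i, σ (σ i) = i)
    (i : Fin n) (hi : i ≤ σ i) : (Tset σ i).card = height (bpath σ) i := by
  -- On up/level steps, the condition `k < σ i` in `Tset` is redundant.
  have hT : Tset σ i = Finset.univ.filter (fun k => k ≤ i ∧ i < σ k) := by
    ext k
    simp only [Tset, mem_filter, mem_univ, true_and]
    constructor
    · rintro ⟨h1, h2, h3⟩; exact ⟨h1, h3⟩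
    · rintro ⟨h1, h2⟩
      refine ⟨h1, ?_, h2⟩
      rcases eq_or_lt_of_le (h1.trans hi) with h | h
      · exfalso
        have : σ k = i := by rw [h, hinv]
        exact absurd (this ▸ h2) (lt_irrefl _)
      · exact h
  -- The set of up steps `≤ i` splits into `Tset` and those with partner `≤ i`.
  have hA : (Finset.univ.filter (fun j => j ≤ i ∧ bpath (σ) j = Step.U))
      = (Finset.univ.filter (fun k => k ≤ i ∧ i < σ k))
        ∪ (Finset.univ.filter (fun k => k ≤ i ∧ k < σ k ∧ σ k ≤ i)) := by
    ext j
    simp only [mem_filter, mem_univ, true_and, mem_union, bpath_eq_U]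
    constructor
    · rintro ⟨h1, h2⟩
      rcases le_or_gt (σ j) i with h | h
      · exact Or.inr ⟨h1, h2, h⟩
      · exact Or.inl ⟨h1, h⟩
    · rintro (⟨h1, h2⟩ | ⟨h1, h2, h3⟩)
      · exact ⟨h1, lt_of_le_of_lt h1 h2⟩
      · exact ⟨h1, h2⟩
  have hdisj : Disjoint (Finset.univ.filter (fun k => k ≤ i ∧ i < σ k))
      (Finset.univ.filter (fun k => k ≤ i ∧ k < σ k ∧ σ k ≤ i)) := by
    rw [Finset.disjoint_left]
    intro k hk hk'
    simp only [mem_filter, mem_univ, true_and] at hk hk'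
    exact absurd (hk.2.trans_le hk'.2.2) (lt_irrefl _)
  have hB : (Finset.univ.filter (fun k => k ≤ i ∧ k < σ k ∧ σ k ≤ i)).card
      = (Finset.univ.filter (fun j => j < i ∧ bpath (σ) j = Step.D)).card := by
    apply Finset.card_bij (fun k _ => σ k)
    · intro k hk
      simp only [mem_filter, mem_univ, true_and, bpath_eq_D] at hk ⊢
      refine ⟨?_, by rw [hinv]; exact hk.2.1⟩
      rcases eq_or_lt_of_le hk.2.2 with h | h
      · exfalso
        have hsik : σ i = k := by rw [← h, hinv]
        have hk1 : k < i := h ▸ hk.2.1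
        have hik : i ≤ k := hsik ▸ hi
        exact absurd hk1 (not_lt.mpr hik)
      · exact h
    · intro a ha b hb hab
      exact σ.injective hab
    · intro j hj
      simp only [mem_filter, mem_univ, true_and, bpath_eq_D] at hj
      refine ⟨σ j, ?_, hinv j⟩
      simp only [mem_filter, mem_univ, true_and, hinv]
      exact ⟨le_of_lt (hj.2.trans hj.1), hj.2, le_of_lt hj.1⟩
  unfold height
  rw [hA, Finset.card_union_of_disjoint hdisj, hB, hT]
  omega

/-- For an involution `σ` with Biane labeled Motzkin path `(μ, λ)`, the number of
visible inversions equals `H(μ,λ) = Σ_i H_i` where `H_i = λ_i − 1` on down steps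
and `H_i = h_i(μ)` on up and level steps. -/
theorem visible_inversions_eq_H {n : ℕ} (σ : Equiv.Perm (Fin n))
    (hinv : ∀ i, σ (σ i) = i) :
    (Finset.univ.filter (fun p : Fin n × Fin n =>
        p.1 < p.2 ∧ σ p.2 < σ p.1 ∧ σ p.2 ≤ min p.1 (σ p.1))).card
      = ∑ i : Fin n,
          (if bpath σ i = Step.D then blabel σ i - 1 else height (bpath σ) i) := by
  classical
  rw [Finset.card_eq_sum_card_fiberwise (f := Prod.fst) (t := Finset.univ)
    (fun x _ => Finset.mem_univ _)]
  refine Finset.sum_congr rfl fun i _ => ?_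
  have hfib : ((Finset.univ.filter (fun p : Fin n × Fin n =>
        p.1 < p.2 ∧ σ p.2 < σ p.1 ∧ σ p.2 ≤ min p.1 (σ p.1))).filter
        (fun p => p.1 = i)).card = (Tset σ i).card := by
    apply Finset.card_bij (fun p _ => σ p.2)
    · intro p hp
      simp only [mem_filter, mem_univ, true_and, le_min_iff] at hp
      obtain ⟨⟨h1, h2, h3, h4⟩, h5⟩ := hp
      subst h5
      simp only [Tset, mem_filter, mem_univ, true_and]
      exact ⟨h3, h2, by rw [hinv]; exact h1⟩
    · intro a ha b hb hab
      simp only [mem_filter] at ha hb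
      have := σ.injective hab
      exact Prod.ext (ha.2.trans hb.2.symm) this
    · intro k hk
      simp only [Tset, mem_filter, mem_univ, true_and] at hk
      refine ⟨(i, σ k), ?_, by simp [hinv]⟩
      simp only [mem_filter, mem_univ, true_and, le_min_iff, hinv]
      exact ⟨⟨hk.2.2, hk.2.1, hk.1, le_of_lt hk.2.1⟩, trivial⟩
  rw [hfib]
  by_cases hD : bpath σ i = Step.D
  · rw [if_pos hD]
    exact card_Tset_D σ hinv i ((bpath_eq_D σ i).mp hD)
  · rw [if_neg hD]
    have : i ≤ σ i := by
      rcases lt_trichotomy i (σ i) with h | h | h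
      · exact le_of_lt h
      · exact le_of_eq h
      · exact absurd ((bpath_eq_D σ i).mpr h) hD
    exact card_Tset_UL σ hinv i this
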